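/- Let F : E × E → E be a coordinate retraction family that is C² on a neighborhood of (0, 0). Then there exist constants C > 0 and ε > 0 such that for all u, v ∈ E with ‖u‖ ≤ ε, ‖v‖ ≤ ε and F(−u, v) = u, one has ‖F(−u, v/2)‖ ≤ C‖u‖². (That is, the coordinate δ of the retraction midpoint, constructed by pulling q_y back to the tangent space at q_x via the inverse retraction, halving, and retracting, approximates the true geodesic midpoint — the origin of the normal coordinate chart — with second-order accuracy in the separation.) -/

import Mathlib

set_option maxHeartbeats 1000000 in
/-- **Second-order accuracy of the retraction midpoint (Lemma 2 of the paper).**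
In Riemann normal coordinates centred at the geodesic midpoint, the configurations `q_x, q_y`
have coordinates `-u, u` and the geodesic midpoint is the origin.  If `F` is a coordinate
retraction family that is `C²` near `(0, 0)`, `v` is the inverse retraction of `q_y` at `q_x`
(i.e. `F (-u, v) = u`), then the retraction midpoint `δ = F (-u, v/2)` satisfies
`‖δ‖ ≤ C ‖u‖²` for all small `u, v`. -/
theorem retraction_midpoint_second_order_accuracy
    {E : Type*} [NormedAddCommGroup E] [InnerProductSpace ℝ E] [FiniteDimensional ℝ E]
    (F : E × E → E)
    (hF : ContDiffAt ℝ 2 F (0, 0))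
    (hF0 : ∀ᶠ z in nhds (0 : E), F (z, 0) = z)
    (hFid : fderiv ℝ (fun ζ : E => F (0, ζ)) 0 = ContinuousLinearMap.id ℝ E) :
    ∃ C > 0, ∃ ε > 0, ∀ u v : E, ‖u‖ ≤ ε → ‖v‖ ≤ ε → F (-u, v) = u →
      ‖F (-u, (1 / 2 : ℝ) • v)‖ ≤ C * ‖u‖ ^ 2 := by
  have hmk : ∀ a b : E, ‖((a, b) : E × E)‖ = max ‖a‖ ‖b‖ := fun a b => rfl
  have h00 : ((0, 0) : E × E) = (0 : E × E) := rfl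
  -- the derivative of F is Lipschitz on a neighborhood of (0,0)
  have hF1 : ContDiffAt ℝ 1 (fderiv ℝ F) (0, 0) :=
    hF.fderiv_right (by norm_num)
  obtain ⟨K, t, ht, hlip⟩ := hF1.exists_lipschitzOnWith
  -- F is differentiable on a neighborhood of (0,0)
  obtain ⟨U, hU, hFU⟩ := hF.contDiffOn (m := 1) (by norm_num) (by simp)
  obtain ⟨U', hU'U, hU'open, hU'mem⟩ := mem_nhds_iff.1 hU
  -- pick r > 0 with the closed ball inside t ∩ U' and F(z,0)=z for ‖z‖ ≤ r
  obtain ⟨r1, hr1, hball1⟩ := Metric.mem_nhds_iff.1 (Filter.inter_mem ht (hU'open.mem_nhds hU'mem))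
  obtain ⟨r2, hr2, hball2⟩ := Metric.mem_nhds_iff.1 hF0
  set r : ℝ := min (r1 / 2) (r2 / 2) with hrdef
  have hrpos : 0 < r := lt_min (by linarith) (by linarith)
  have hrt : ∀ p : E × E, ‖p‖ ≤ r → p ∈ t ∩ U' := by
    intro p hp
    apply hball1
    rw [Metric.mem_ball, h00, dist_zero_right]
    calc ‖p‖ ≤ r := hp
      _ ≤ r1 / 2 := min_le_left _ _
      _ < r1 := by linarith
  have hrF0 : ∀ z : E, ‖z‖ ≤ r → F (z, 0) = z := by
    intro z hz
    apply hball2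
    rw [Metric.mem_ball, dist_zero_right]
    calc ‖z‖ ≤ r := hz
      _ ≤ r2 / 2 := min_le_right _ _
      _ < r2 := by linarith
  set L : ℝ := (K : ℝ) + 1 with hLdef
  have hLpos : (0 : ℝ) < L := by positivity
  have hKL : (K : ℝ) ≤ L := by simp [hLdef]
  -- F differentiable at all points of the closed ball of radius r
  have hdiff : ∀ p : E × E, ‖p‖ ≤ r → DifferentiableAt ℝ F p := by
    intro p hp
    exact (hFU.differentiableOn one_ne_zero).differentiableAt
      (mem_nhds_iff.2 ⟨U', hU'U, hU'open, (hrt p hp).2⟩)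
  -- Lipschitz bound on the derivative, in ‖·‖ form
  have hlipnorm : ∀ p q : E × E, ‖p‖ ≤ r → ‖q‖ ≤ r →
      ‖fderiv ℝ F p - fderiv ℝ F q‖ ≤ L * ‖p - q‖ := by
    intro p q hp hq
    have := hlip.dist_le_mul p (hrt p hp).1 q (hrt q hq).1
    rw [dist_eq_norm, dist_eq_norm] at this
    calc ‖fderiv ℝ F p - fderiv ℝ F q‖ ≤ (K : ℝ) * ‖p - q‖ := this
      _ ≤ L * ‖p - q‖ := mul_le_mul_of_nonneg_right hKL (norm_nonneg _)
  -- D F (0,0) (0, w) = w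
  have hD0 : ∀ w : E, fderiv ℝ F (0, 0) (0, w) = w := by
    intro w
    have hinr : HasFDerivAt (fun ζ : E => ((0 : E), ζ)) (ContinuousLinearMap.inr ℝ E E) 0 :=
      (ContinuousLinearMap.inr ℝ E E).hasFDerivAt
    have hFat : HasFDerivAt F (fderiv ℝ F (0, 0)) ((fun ζ : E => ((0 : E), ζ)) 0) :=
      (hdiff (0, 0) (by rw [hmk]; simp [hrpos.le])).hasFDerivAt
    have hcomp : HasFDerivAt (fun ζ : E => F (0, ζ))
        ((fderiv ℝ F (0, 0)).comp (ContinuousLinearMap.inr ℝ E E)) 0 :=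
      hFat.comp 0 hinr
    have h2 : (fderiv ℝ F (0, 0)).comp (ContinuousLinearMap.inr ℝ E E)
        = ContinuousLinearMap.id ℝ E := by
      rw [← hcomp.fderiv]; exact hFid
    have := congrFun (congrArg DFunLike.coe h2) w
    simpa using this
  -- Key Taylor-type bound: ‖F (z, w) - z - w‖ ≤ L * ‖w‖ * (‖w‖ + ‖z‖)
  have key : ∀ z w : E, ‖z‖ ≤ r → ‖w‖ ≤ r →
      ‖F (z, w) - z - w‖ ≤ L * ‖w‖ * (‖w‖ + ‖z‖) := by
    intro z w hz hw
    set s : Set (E × E) := Metric.closedBall ((z, 0) : E × E) ‖w‖ ∩ Metric.closedBall 0 r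
      with hsdef
    have hs : Convex ℝ s := (convex_closedBall _ _).inter (convex_closedBall _ _)
    have hzs : ((z, 0) : E × E) ∈ s := by
      constructor
      · simp
      · rw [Metric.mem_closedBall, dist_zero_right, hmk]
        exact max_le hz (by simp [hrpos.le])
    have hws : ((z, w) : E × E) ∈ s := by
      constructor
      · rw [Metric.mem_closedBall, dist_eq_norm, Prod.mk_sub_mk, sub_self, sub_zero, hmk]
        simp
      · rw [Metric.mem_closedBall, dist_zero_right, hmk]
        exact max_le hz hw
    have hsr : ∀ p ∈ s, ‖p‖ ≤ r := by
      intro p hp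
      simpa [dist_zero_right] using hp.2
    have hmvt := hs.norm_image_sub_le_of_norm_hasFDerivWithin_le'
      (f := F) (f' := fun p => fderiv ℝ F p) (φ := fderiv ℝ F (z, 0)) (C := L * ‖w‖)
      (fun p hp => ((hdiff p (hsr p hp)).hasFDerivAt).hasFDerivWithinAt)
      (fun p hp => by
        calc ‖fderiv ℝ F p - fderiv ℝ F (z, 0)‖ ≤ L * ‖p - (z, 0)‖ :=
              hlipnorm p (z, 0) (hsr p hp) (hsr _ hzs)
          _ ≤ L * ‖w‖ := by
              apply mul_le_mul_of_nonneg_left _ hLpos.le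
              rw [← dist_eq_norm]
              exact hp.1)
      hzs hws
    have hsub : ((z, w) : E × E) - (z, 0) = (0, w) := by
      rw [Prod.mk_sub_mk, sub_self, sub_zero]
    rw [hsub] at hmvt
    have hnorm0w : ‖((0 : E), w)‖ = ‖w‖ := by rw [hmk]; simp
    rw [hnorm0w, hrF0 z hz] at hmvt
    -- bound the linear part
    have hlin : ‖fderiv ℝ F (z, 0) (0, w) - w‖ ≤ L * ‖z‖ * ‖w‖ := by
      have h1 : fderiv ℝ F (z, 0) (0, w) - w
          = (fderiv ℝ F (z, 0) - fderiv ℝ F (0, 0)) ((0 : E), w) := by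
        rw [ContinuousLinearMap.sub_apply, hD0 w]
      rw [h1]
      calc ‖(fderiv ℝ F (z, 0) - fderiv ℝ F (0, 0)) ((0 : E), w)‖
          ≤ ‖fderiv ℝ F (z, 0) - fderiv ℝ F (0, 0)‖ * ‖((0 : E), w)‖ :=
            ContinuousLinearMap.le_opNorm _ _
        _ ≤ (L * ‖((z, (0 : E)) : E × E) - (0, 0)‖) * ‖w‖ := by
            rw [hnorm0w]
            apply mul_le_mul_of_nonneg_right _ (norm_nonneg _)
            apply hlipnorm (z, 0) (0, 0) (hsr _ hzs)
            rw [hmk]; simp [hrpos.le]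
        _ = L * ‖z‖ * ‖w‖ := by
            rw [Prod.mk_sub_mk, sub_zero, sub_zero, hmk]
            simp [mul_assoc]
    calc ‖F (z, w) - z - w‖
        = ‖(F (z, w) - z - fderiv ℝ F (z, 0) (0, w)) + (fderiv ℝ F (z, 0) (0, w) - w)‖ := by
          congr 1; abel
      _ ≤ ‖F (z, w) - z - fderiv ℝ F (z, 0) (0, w)‖ + ‖fderiv ℝ F (z, 0) (0, w) - w‖ :=
          norm_add_le _ _
      _ ≤ L * ‖w‖ * ‖w‖ + L * ‖z‖ * ‖w‖ := add_le_add hmvt hlin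
      _ = L * ‖w‖ * (‖w‖ + ‖z‖) := by ring
  -- now the main argument
  refine ⟨10 * L, by positivity, min r (1 / (4 * L)), lt_min hrpos (by positivity), ?_⟩
  intro u v hu hv huv
  have hur : ‖u‖ ≤ r := le_trans hu (min_le_left _ _)
  have hvr : ‖v‖ ≤ r := le_trans hv (min_le_left _ _)
  have huL : L * ‖u‖ ≤ 1 / 4 := by
    have h := le_trans hu (min_le_right _ _)
    calc L * ‖u‖ ≤ L * (1 / (4 * L)) := mul_le_mul_of_nonneg_left h hLpos.le
      _ = 1 / 4 := by field_simp
  have hvL : L * ‖v‖ ≤ 1 / 4 := by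
    have h := le_trans hv (min_le_right _ _)
    calc L * ‖v‖ ≤ L * (1 / (4 * L)) := mul_le_mul_of_nonneg_left h hLpos.le
      _ = 1 / 4 := by field_simp
  have hnu : ‖(-u : E)‖ = ‖u‖ := norm_neg u
  -- bound on the defect g = 2u - v
  have hg : ‖(2 : ℝ) • u - v‖ ≤ L * ‖v‖ * (‖v‖ + ‖u‖) := by
    have h1 := key (-u) v (by rwa [hnu]) hvr
    rw [huv, hnu] at h1
    have h2 : u - -u - v = (2 : ℝ) • u - v := by
      rw [two_smul]; abel
    rwa [h2] at h1
  -- ‖v‖ ≤ 3 ‖u‖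
  have hv3 : ‖v‖ ≤ 3 * ‖u‖ := by
    have h0 : (2:ℝ) • u - ((2:ℝ) • u - v) = v := by abel
    have h1 : ‖v‖ ≤ ‖(2:ℝ) • u‖ + ‖(2:ℝ) • u - v‖ := by
      have := norm_sub_le ((2:ℝ) • u) ((2:ℝ) • u - v)
      rwa [h0] at this
    have h2 : ‖(2:ℝ) • u‖ = 2 * ‖u‖ := by
      rw [norm_smul]; simp
    have h3 : L * ‖v‖ * (‖v‖ + ‖u‖) ≤ (1/4) * ‖v‖ + (1/4) * ‖u‖ := by
      nlinarith [norm_nonneg v, norm_nonneg u]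
    nlinarith [hg, h1, h2, h3, norm_nonneg u, norm_nonneg v]
  -- half vector
  have hhalf : ‖(1 / 2 : ℝ) • v‖ = ‖v‖ / 2 := by
    rw [norm_smul, Real.norm_eq_abs, abs_of_pos (by norm_num : (0:ℝ) < 1/2)]
    ring
  have hv2r : ‖(1 / 2 : ℝ) • v‖ ≤ r := by
    rw [hhalf]; linarith [norm_nonneg v]
  have h4 := key (-u) ((1 / 2 : ℝ) • v) (by rwa [hnu]) hv2r
  rw [hnu, hhalf] at h4
  have hgs : ‖(1 / 2 : ℝ) • ((2 : ℝ) • u - v)‖ ≤ (1/2) * (L * ‖v‖ * (‖v‖ + ‖u‖)) := by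
    rw [norm_smul, Real.norm_eq_abs, abs_of_pos (by norm_num : (0:ℝ) < 1/2)]
    exact mul_le_mul_of_nonneg_left hg (by norm_num)
  have hdecomp : F (-u, (1 / 2 : ℝ) • v)
      = (F (-u, (1 / 2 : ℝ) • v) - (-u) - (1 / 2 : ℝ) • v)
        - (1 / 2 : ℝ) • ((2 : ℝ) • u - v) := by
    have h5 : (1 / 2 : ℝ) • ((2 : ℝ) • u - v) = u - (1 / 2 : ℝ) • v := by
      rw [smul_sub, smul_smul]
      norm_num
    rw [h5]; abel
  calc ‖F (-u, (1 / 2 : ℝ) • v)‖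
      = ‖(F (-u, (1 / 2 : ℝ) • v) - (-u) - (1 / 2 : ℝ) • v)
          - (1 / 2 : ℝ) • ((2 : ℝ) • u - v)‖ := by conv_lhs => rw [hdecomp]
    _ ≤ ‖F (-u, (1 / 2 : ℝ) • v) - (-u) - (1 / 2 : ℝ) • v‖
          + ‖(1 / 2 : ℝ) • ((2 : ℝ) • u - v)‖ := norm_sub_le _ _
    _ ≤ L * (‖v‖ / 2) * (‖v‖ / 2 + ‖u‖) + (1/2) * (L * ‖v‖ * (‖v‖ + ‖u‖)) :=
        add_le_add h4 hgs
    _ ≤ 10 * L * ‖u‖ ^ 2 := by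
        nlinarith [norm_nonneg u, norm_nonneg v, hLpos.le,
          mul_le_mul_of_nonneg_left
            (mul_le_mul hv3 hv3 (norm_nonneg v) (by positivity)) hLpos.le,
          mul_le_mul_of_nonneg_left
            (mul_le_mul_of_nonneg_right hv3 (norm_nonneg u)) hLpos.le,
          mul_nonneg hLpos.le (mul_nonneg (norm_nonneg u) (norm_nonneg u))]
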